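/- Every κ-Fréchet–Urysohn Tychonoff space X is an Ascoli space; that is, every compact subset of C_k(X) (the space of continuous real-valued functions with the compact-open topology) is equicontinuous. -/

import Mathlib

open Filter Topology Uniformity

/-- A topological space is κ-Fréchet–Urysohn if for every open set `U` and every point
`x` in the closure of `U` there is a sequence in `U` converging to `x`. -/
def KappaFrechetUrysohn (X : Type*) [TopologicalSpace X] : Prop :=
  ∀ U : Set X, IsOpen U → ∀ x ∈ closure U,
    ∃ u : ℕ → X, (∀ n, u n ∈ U) ∧ Tendsto u atTop (𝓝 x)

/-- Every κ-Fréchet–Urysohn Tychonoff space is Ascoli: every compact subset of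
`C_k(X)` (continuous real-valued functions with the compact-open topology) is
equicontinuous. -/
theorem stmt6 {X : Type*} [TopologicalSpace X] [CompletelyRegularSpace X] [T2Space X]
    (h : KappaFrechetUrysohn X) (K : Set C(X, ℝ)) (hK : IsCompact K) :
    ∀ x : X, ∀ ε > (0 : ℝ), ∃ V ∈ 𝓝 x, ∀ y ∈ V, ∀ f ∈ K, |f y - f x| < ε := by
  intro x ε hε
  by_contra hcon
  push_neg at hcon
  -- the open set of "bad" points
  set U : Set X := ⋃ f ∈ K, {y | ε / 2 < |f y - f x|} with hU
  have hUopen : IsOpen U := by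
    refine isOpen_biUnion fun f _ => ?_
    have : Continuous fun y => |f y - f x| := (f.continuous.sub continuous_const).abs
    exact isOpen_lt continuous_const this
  have hxcl : x ∈ closure U := by
    rw [mem_closure_iff_nhds]
    intro V hV
    obtain ⟨y, hyV, f, hfK, hfy⟩ := hcon V hV
    exact ⟨y, hyV, Set.mem_biUnion hfK (by simpa using lt_of_lt_of_le (by linarith) hfy)⟩
  obtain ⟨u, huU, hu⟩ := h U hUopen x hxcl
  -- choose witnessing functions
  have hch : ∀ n, ∃ f ∈ K, ε / 2 < |f (u n) - f x| := by
    intro n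
    have := huU n
    simpa [hU] using this
  choose g hgK hg using hch
  -- cluster point of the sequence `g` in the compact set `K`
  have hne : (Filter.map g atTop).NeBot := Filter.map_neBot
  obtain ⟨f, hfK, hcl⟩ := hK.exists_clusterPt (f := Filter.map g atTop)
    (le_principal_iff.2 (Filter.mem_map.2 (Filter.univ_mem' hgK)))
  -- compact set: limit point plus range of the sequence
  have hL : IsCompact (insert x (Set.range u)) := hu.isCompact_insert_range
  -- neighborhood of `f` in the compact-open topology
  have hOent : {p : ℝ × ℝ | dist p.1 p.2 < ε / 8} ∈ 𝓤 ℝ :=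
    Metric.dist_mem_uniformity (by linarith)
  have hO : {g' : C(X, ℝ) | ∀ z ∈ insert x (Set.range u), dist (f z) (g' z) < ε / 8} ∈ 𝓝 f := by
    have hb := nhds_basis_uniformity' (x := f)
      (ContinuousMap.hasBasis_compactConvergenceUniformity (α := X) (β := ℝ))
    exact hb.mem_of_mem (i := (insert x (Set.range u), {p : ℝ × ℝ | dist p.1 p.2 < ε / 8}))
      ⟨hL, hOent⟩
  -- `f` is continuous at `x`, so eventually `|f (u n) - f x|` is small
  have hfx : ∀ᶠ n in atTop, |f (u n) - f x| < ε / 8 := by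
    have : Tendsto (fun n => f (u n)) atTop (𝓝 (f x)) := (f.continuous.tendsto x).comp hu
    have := (Metric.tendsto_nhds.1 this) (ε / 8) (by linarith)
    filter_upwards [this] with n hn
    simpa [Real.dist_eq] using hn
  -- get `n` with `g n` close to `f` on the whole range, and `u n` close to `x`
  have hfreq : ∃ᶠ n in atTop, g n ∈
      {g' : C(X, ℝ) | ∀ z ∈ insert x (Set.range u), dist (f z) (g' z) < ε / 8} := by
    have := (mapClusterPt_iff_frequently).1 hcl _ hO
    exact this
  obtain ⟨n, hn1, hn2⟩ := (hfreq.and_eventually hfx).exists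
  have h1 : dist (f x) (g n x) < ε / 8 := hn1 x (Set.mem_insert _ _)
  have h2 : dist (f (u n)) (g n (u n)) < ε / 8 := hn1 (u n) (Set.mem_insert_of_mem _ ⟨n, rfl⟩)
  rw [Real.dist_eq] at h1 h2
  have := hg n
  have h3 : |g n (u n) - g n x| ≤ |f (u n) - g n (u n)| + |f (u n) - f x| + |f x - g n x| := by
    have : g n (u n) - g n x = -(f (u n) - g n (u n)) + (f (u n) - f x) + (f x - g n x) := by ring
    rw [this]
    calc |-(f (u n) - g n (u n)) + (f (u n) - f x) + (f x - g n x)|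
        ≤ |-(f (u n) - g n (u n)) + (f (u n) - f x)| + |f x - g n x| := abs_add_le _ _
      _ ≤ |-(f (u n) - g n (u n))| + |f (u n) - f x| + |f x - g n x| := by
          gcongr; exact abs_add_le _ _
      _ = |f (u n) - g n (u n)| + |f (u n) - f x| + |f x - g n x| := by rw [abs_neg]
  linarith
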